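/- arXiv:1605.07859 — 7 statements merged into one kernel-verified Lean document; each statement's English description precedes it below -/
import Mathlib

section
/- If p is a complex polynomial of degree 3 with three distinct fixed points z₁, z₂, z₃, then at least one of the multipliers p'(zᵢ) has real part at least 1. -/
open Polynomial

theorem cubic_unattractive_fixed_point (p : ℂ[X]) (hdeg : p.natDegree = 3)
    (z₁ z₂ z₃ : ℂ) (h12 : z₁ ≠ z₂) (h13 : z₁ ≠ z₃) (h23 : z₂ ≠ z₃)
    (hf₁ : p.eval z₁ = z₁) (hf₂ : p.eval z₂ = z₂) (hf₃ : p.eval z₃ = z₃) :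
    1 ≤ (p.derivative.eval z₁).re ∨ 1 ≤ (p.derivative.eval z₂).re ∨
      1 ≤ (p.derivative.eval z₃).re := by
  classical
  set q : ℂ[X] := p - X with hq
  have hqdeg : q.natDegree = 3 := by
    rw [hq, Polynomial.natDegree_sub_eq_left_of_natDegree_lt] <;>
      simp [hdeg, Polynomial.natDegree_X]
  set c : ℂ := q.coeff 3 with hc
  have hc0 : c ≠ 0 := by
    have hqne : q ≠ 0 := fun h => by simp [h] at hqdeg
    have := Polynomial.leadingCoeff_ne_zero.mpr hqne
    rwa [Polynomial.leadingCoeff, hqdeg] at this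
  set g : ℂ[X] := C c * ((X - C z₁) * ((X - C z₂) * (X - C z₃))) with hg
  have hgmon : ((X - C z₁) * ((X - C z₂) * (X - C z₃)) : ℂ[X]).Monic :=
    (monic_X_sub_C z₁).mul ((monic_X_sub_C z₂).mul (monic_X_sub_C z₃))
  have hgdeg : ((X - C z₁) * ((X - C z₂) * (X - C z₃)) : ℂ[X]).natDegree = 3 := by
    rw [(monic_X_sub_C z₁).natDegree_mul ((monic_X_sub_C z₂).mul (monic_X_sub_C z₃)),
      (monic_X_sub_C z₂).natDegree_mul (monic_X_sub_C z₃)]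
    simp
  have hgc : g.coeff 3 = c := by
    rw [hg, coeff_C_mul]
    have : ((X - C z₁) * ((X - C z₂) * (X - C z₃)) : ℂ[X]).coeff 3 = 1 := by
      have := hgmon
      rw [Polynomial.Monic, Polynomial.leadingCoeff, hgdeg] at this
      exact this
    rw [this, mul_one]
  have hgdle : g.natDegree ≤ 3 := by
    rw [hg]
    exact (Polynomial.natDegree_mul_le).trans (by simp [hgdeg])
  have hr : q = g := by
    have h0 : q - g = 0 := by
      rcases eq_or_ne (q - g) 0 with h | hne
      · exact h
      apply Polynomial.eq_zero_of_natDegree_lt_card_of_eval_eq_zero' _ {z₁, z₂, z₃}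
      · intro i hi
        simp only [Finset.mem_insert, Finset.mem_singleton] at hi
        rcases hi with rfl | rfl | rfl <;>
          · simp only [hg, hq, eval_sub, eval_mul, eval_add, eval_X, eval_C, hf₁, hf₂, hf₃]
            ring
      · have hcard : ({z₁, z₂, z₃} : Finset ℂ).card = 3 := by
          rw [Finset.card_insert_of_notMem (by simp [h12, h13]),
            Finset.card_insert_of_notMem (by simp [h23]), Finset.card_singleton]
        rw [hcard]
        have hcoeff : (q - g).coeff 3 = 0 := by
          rw [Polynomial.coeff_sub, hgc, ← hc, sub_self]
        have hle : (q - g).natDegree ≤ 3 :=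
          (Polynomial.natDegree_sub_le q g).trans (by simp [hqdeg, hgdle])
        have hne3 : (q - g).natDegree ≠ 3 := by
          intro h3
          apply hne
          apply Polynomial.leadingCoeff_eq_zero.mp
          rw [Polynomial.leadingCoeff, h3]
          exact hcoeff
        omega
    exact sub_eq_zero.mp h0
  have hp : p = g + X := by
    rw [← hr, hq]; ring
  have hd₁ : p.derivative.eval z₁ = 1 + c * ((z₁ - z₂) * (z₁ - z₃)) := by
    rw [hp, hg]; simp [derivative_mul]; ring
  have hd₂ : p.derivative.eval z₂ = 1 + c * ((z₂ - z₁) * (z₂ - z₃)) := by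
    rw [hp, hg]; simp [derivative_mul]; ring
  have hd₃ : p.derivative.eval z₃ = 1 + c * ((z₃ - z₁) * (z₃ - z₂)) := by
    rw [hp, hg]; simp [derivative_mul]; ring
  set A : ℂ := c * ((z₁ - z₂) * (z₁ - z₃)) with hA
  set B : ℂ := c * ((z₂ - z₁) * (z₂ - z₃)) with hB
  set D : ℂ := c * ((z₃ - z₁) * (z₃ - z₂)) with hD
  have e12 : z₁ - z₂ ≠ 0 := sub_ne_zero.mpr h12
  have e13 : z₁ - z₃ ≠ 0 := sub_ne_zero.mpr h13
  have e23 : z₂ - z₃ ≠ 0 := sub_ne_zero.mpr h23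
  have e21 : z₂ - z₁ ≠ 0 := sub_ne_zero.mpr h12.symm
  have e31 : z₃ - z₁ ≠ 0 := sub_ne_zero.mpr h13.symm
  have e32 : z₃ - z₂ ≠ 0 := sub_ne_zero.mpr h23.symm
  have hA0 : A ≠ 0 := by simp [hA, hc0, e12, e13]
  have hB0 : B ≠ 0 := by simp [hB, hc0, e21, e23]
  have hD0 : D ≠ 0 := by simp [hD, hc0, e31, e32]
  have hsum : A⁻¹ + B⁻¹ + D⁻¹ = 0 := by
    rw [hA, hB, hD]
    field_simp
    ring
  by_contra hcon
  push_neg at hcon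
  obtain ⟨h1, h2, h3⟩ := hcon
  rw [hd₁] at h1; rw [hd₂] at h2; rw [hd₃] at h3
  simp only [Complex.add_re, Complex.one_re] at h1 h2 h3
  have hA' : A.re < 0 := by linarith
  have hB' : B.re < 0 := by linarith
  have hD' : D.re < 0 := by linarith
  have iA : (A⁻¹).re < 0 := by
    rw [Complex.inv_re]
    exact div_neg_of_neg_of_pos hA' (Complex.normSq_pos.mpr hA0)
  have iB : (B⁻¹).re < 0 := by
    rw [Complex.inv_re]
    exact div_neg_of_neg_of_pos hB' (Complex.normSq_pos.mpr hB0)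
  have iD : (D⁻¹).re < 0 := by
    rw [Complex.inv_re]
    exact div_neg_of_neg_of_pos hD' (Complex.normSq_pos.mpr hD0)
  have : (A⁻¹ + B⁻¹ + D⁻¹).re = 0 := by rw [hsum]; simp
  simp only [Complex.add_re] at this
  linarith
end

section
/- Let z₁, …, zₙ be distinct complex numbers that are fixed points of a polynomial p, with multipliers αᵢ = p'(zᵢ). For each k with 2 ≤ k ≤ n, the divided difference satisfies f[z₁,z₁,…,z_k,z_k] = Σ_{i=1}^{k} (αᵢ - 1)/π^k_i, where π^k_i = ∏_{j=1, j≠i}^{k} (zᵢ - zⱼ)². -/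
open Polynomial Finset

/-- Divided differences with possibly repeated (adjacent) nodes:
`g` gives the function values and `d` the derivative values at doubled nodes. -/
noncomputable def dd (g d : ℂ → ℂ) : List ℂ → ℂ
  | [] => 0
  | [z] => g z
  | [z, w] => if z = w then d z else (g w - g z) / (w - z)
  | z :: w :: u :: rest =>
    (dd g d (w :: u :: rest) - dd g d ((z :: w :: u :: rest).dropLast)) /
      ((u :: rest).getLast (by simp) - z)
termination_by l => l.length


lemma dd_sub (g1 d1 g2 d2 : ℂ → ℂ) :
    ∀ (n : ℕ) (l : List ℂ), l.length ≤ n →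
      dd (fun x => g1 x - g2 x) (fun x => d1 x - d2 x) l = dd g1 d1 l - dd g2 d2 l := by
  intro n
  induction n with
  | zero =>
    intro l hl
    have : l = [] := List.length_eq_zero_iff.mp (Nat.le_zero.mp hl)
    subst this; simp [dd]
  | succ n ih =>
    intro l hl
    match l with
    | [] => simp [dd]
    | [x] => simp [dd]
    | [x, y] =>
      by_cases h : x = y
      · simp [dd, h]
      · simp only [dd, if_neg h]; ring
    | x :: y :: u :: t =>
      rw [dd, dd, dd]
      rw [ih (y::u::t) (by simp only [List.length_cons] at hl ⊢; omega),
        ih ((x::y::u::t).dropLast) (by rw [List.length_dropLast]; simp only [List.length_cons] at hl ⊢; omega)]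
      ring

lemma dd_pair (x y : ℂ) : dd (fun w => w) (fun _ => 1) [x, y] = 1 := by
  by_cases h : x = y
  · simp [dd, h]
  · simp only [dd, if_neg h]
    exact div_self (sub_ne_zero.mpr fun e => h e.symm)

lemma dd_id : ∀ (n : ℕ) (l : List ℂ), l.length ≤ n → 3 ≤ l.length →
    dd (fun w => w) (fun _ => 1) l = 0 := by
  intro n
  induction n with
  | zero => intro l h1 h2; omega
  | succ n ih =>
    intro l hl h3
    match l with
    | [x, y, u] =>
      rw [dd]
      have h1 : ([x,y,u] : List ℂ).dropLast = [x,y] := rfl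
      rw [h1, dd_pair, dd_pair]
      simp
    | x :: y :: u :: v :: t =>
      rw [dd]
      rw [ih (y::u::v::t) (by simp only [List.length_cons] at hl ⊢; omega) (by simp)]
      rw [ih ((x::y::u::v::t).dropLast) (by rw [List.length_dropLast]; simp only [List.length_cons] at hl ⊢; omega)
        (by rw [List.length_dropLast]; simp only [List.length_cons]; omega)]
      simp


def mfun (a b ea eb i : ℕ) : ℕ := if i = b then eb else if i = a then ea else 2

noncomputable def LL (z : ℕ → ℂ) (a b ea eb : ℕ) : List ℂ :=
  (List.range' a (b + 1 - a)).flatMap fun i => List.replicate (mfun a b ea eb i) (z i)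

noncomputable def tm (z β : ℕ → ℂ) (a b ea eb i : ℕ) : ℂ :=
  if mfun a b ea eb i = 2 then
    β i / ∏ j ∈ (Finset.Icc a b).erase i, (z i - z j) ^ mfun a b ea eb j else 0

noncomputable def SS (z β : ℕ → ℂ) (a b ea eb : ℕ) : ℂ :=
  ∑ i ∈ Finset.Icc a b, tm z β a b ea eb i

lemma flatMap_congr' {α β : Type*} {l : List α} {f g : α → List β}
    (h : ∀ a ∈ l, f a = g a) : l.flatMap f = l.flatMap g := by
  induction l with
  | nil => simp
  | cons x xs ih => simp_all

lemma LL_self (z : ℕ → ℂ) (b ea eb : ℕ) : LL z b b ea eb = List.replicate eb (z b) := by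
  unfold LL
  have : b + 1 - b = 1 := by omega
  rw [this]
  simp [List.range', mfun]

lemma LL_front (z : ℕ → ℂ) {a b : ℕ} (ea eb : ℕ) (hab : a < b) :
    LL z a b ea eb = List.replicate ea (z a) ++ LL z (a+1) b 2 eb := by
  unfold LL
  have h1 : b + 1 - a = (b - a) + 1 := by omega
  have h2 : b + 1 - (a + 1) = b - a := by omega
  rw [h1, h2, List.range'_succ, List.flatMap_cons]
  have h3 : mfun a b ea eb a = ea := by simp only [mfun]; split_ifs <;> omega
  rw [h3]
  congr 1
  apply flatMap_congr'
  intro i hi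
  rw [List.mem_range'_1] at hi
  have : mfun a b ea eb i = mfun (a+1) b 2 eb i := by
    simp only [mfun]; split_ifs <;> omega
  rw [this]

lemma LL_split_right (z : ℕ → ℂ) {a b : ℕ} (ea eb : ℕ) (hab : a ≤ b) :
    LL z a b ea eb =
      ((List.range' a (b - a)).flatMap fun i => List.replicate (mfun a b ea eb i) (z i)) ++
        List.replicate eb (z b) := by
  unfold LL
  have h1 : b + 1 - a = (b - a) + 1 := by omega
  rw [h1, List.range'_1_concat]
  have h2 : a + (b - a) = b := by omega
  rw [h2, List.flatMap_append, List.flatMap_cons, List.flatMap_nil]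
  have h3 : mfun a b ea eb b = eb := by simp only [mfun]; split_ifs <;> omega
  rw [h3, List.append_nil]

lemma LL_back (z : ℕ → ℂ) {a b : ℕ} (ea eb : ℕ) (hab : a + 1 < b) :
    LL z a b ea eb = LL z a (b-1) ea 2 ++ List.replicate eb (z b) := by
  rw [LL_split_right z ea eb (by omega)]
  congr 1
  have h1 : (b - 1) + 1 - a = b - a := by omega
  unfold LL
  rw [h1]
  apply flatMap_congr'
  intro i hi
  rw [List.mem_range'_1] at hi
  have : mfun a b ea eb i = mfun a (b-1) ea 2 i := by
    simp only [mfun]; split_ifs <;> omega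
  rw [this]

lemma LL_getLast? (z : ℕ → ℂ) {a b ea eb : ℕ} (hab : a ≤ b) (heb : eb = 1 ∨ eb = 2) :
    (LL z a b ea eb).getLast? = some (z b) := by
  rw [LL_split_right z ea eb hab]
  rcases heb with rfl | rfl
  · rw [show List.replicate 1 (z b) = [z b] from rfl, List.getLast?_concat]
  · rw [show (List.replicate 2 (z b)) = [z b] ++ [z b] from rfl, ← List.append_assoc,
      List.getLast?_concat]

lemma dd_rec (g d : ℂ → ℂ) (x y u : ℂ) (t : List ℂ) (c : ℂ)
    (hc : (x::y::u::t : List ℂ).getLast? = some c) :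
    dd g d (x::y::u::t) =
      (dd g d (y::u::t) - dd g d ((x::y::u::t).dropLast)) / (c - x) := by
  rw [dd]
  rw [List.getLast?_cons_cons, List.getLast?_cons_cons] at hc
  congr 2
  rw [List.getLast?_eq_getLast (by simp : (u::t : List ℂ) ≠ [])] at hc
  exact (Option.some.inj hc)

-- tail / dropLast lemmas
lemma LL_tail1 (z : ℕ → ℂ) {a b : ℕ} (eb : ℕ) (hab : a < b) :
    (LL z a b 1 eb).tail = LL z (a+1) b 2 eb := by
  rw [LL_front z 1 eb hab]; rfl

lemma LL_tail2 (z : ℕ → ℂ) {a b : ℕ} (eb : ℕ) (hab : a < b) :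
    (LL z a b 2 eb).tail = LL z a b 1 eb := by
  rw [LL_front z 2 eb hab, LL_front z 1 eb hab]; rfl

lemma LL_dropLast1 (z : ℕ → ℂ) {a b : ℕ} (ea : ℕ) (hab : a + 1 < b) :
    (LL z a b ea 1).dropLast = LL z a (b-1) ea 2 := by
  rw [LL_back z ea 1 hab, show List.replicate 1 (z b) = [z b] from rfl,
    List.dropLast_concat]

lemma LL_dropLast2 (z : ℕ → ℂ) {a b : ℕ} (ea : ℕ) (hab : a + 1 < b) :
    (LL z a b ea 2).dropLast = LL z a b ea 1 := by
  rw [LL_back z ea 2 hab, LL_back z ea 1 hab,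
    show List.replicate 2 (z b) = [z b] ++ [z b] from rfl, ← List.append_assoc,
    List.dropLast_concat, show List.replicate 1 (z b) = [z b] from rfl]

lemma canc1 (c x Q : ℂ) (hc : c ≠ 0) : c * (x / (c * Q)) = x / Q := by
  rcases eq_or_ne Q 0 with rfl | hQ
  · simp
  · field_simp

lemma canc2 (c x Q : ℂ) (hc : c ≠ 0) : c * (x / (c^2 * Q)) = x / (c * Q) := by
  rcases eq_or_ne Q 0 with rfl | hQ
  · simp
  · field_simp

lemma sumL1 (z β : ℕ → ℂ) {a b : ℕ} (eb : ℕ) (hab : a < b)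
    (hne : ∀ i ∈ Finset.Icc a b, i ≠ a → z i - z a ≠ 0) :
    SS z β a b 1 eb = ∑ i ∈ Finset.Icc a b, (z i - z a) * tm z β a b 2 eb i := by
  unfold SS
  apply Finset.sum_congr rfl
  intro i hi
  by_cases hia : i = a
  · have h1 : mfun a b 1 eb a = 1 := by simp only [mfun]; split_ifs <;> omega
    rw [hia]
    simp [tm, h1]
  · have hm : ∀ j, j ≠ a → mfun a b 1 eb j = mfun a b 2 eb j := by
      intro j hj; simp only [mfun]; split_ifs <;> omega
    rw [tm, tm, hm i hia]
    by_cases h2 : mfun a b 2 eb i = 2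
    · rw [if_pos h2, if_pos h2]
      have ha_mem : a ∈ (Finset.Icc a b).erase i := by
        rw [Finset.mem_erase]
        exact ⟨fun h => hia h.symm, Finset.mem_Icc.mpr ⟨le_refl a, le_of_lt hab⟩⟩
      rw [← Finset.mul_prod_erase _ _ ha_mem, ← Finset.mul_prod_erase _ _ ha_mem]
      have e1 : mfun a b 1 eb a = 1 := by simp only [mfun]; split_ifs <;> omega
      have e2 : mfun a b 2 eb a = 2 := by simp only [mfun]; split_ifs <;> omega
      rw [e1, e2]
      have eQ : ∏ j ∈ ((Finset.Icc a b).erase i).erase a, (z i - z j) ^ mfun a b 1 eb j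
          = ∏ j ∈ ((Finset.Icc a b).erase i).erase a, (z i - z j) ^ mfun a b 2 eb j := by
        apply Finset.prod_congr rfl
        intro j hj
        rw [hm j (Finset.mem_erase.mp hj).1]
      rw [eQ, pow_one]
      exact (canc2 _ _ _ (hne i hi hia)).symm
    · rw [if_neg h2, if_neg h2, mul_zero]

lemma sumL2 (z β : ℕ → ℂ) {a b : ℕ} (eb : ℕ) (hab : a < b)
    (hne : ∀ i ∈ Finset.Icc a b, i ≠ a → z i - z a ≠ 0) :
    SS z β (a+1) b 2 eb = ∑ i ∈ Finset.Icc a b, (z i - z a) * tm z β a b 1 eb i := by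
  have hIcc : Finset.Icc a b = insert a (Finset.Icc (a+1) b) := by
    ext x; simp; omega
  rw [hIcc, Finset.sum_insert (by simp)]
  rw [sub_self, zero_mul, zero_add]
  unfold SS
  apply Finset.sum_congr rfl
  intro i hi
  have hi' : a + 1 ≤ i ∧ i ≤ b := Finset.mem_Icc.mp hi
  have hm : ∀ j, a + 1 ≤ j → mfun (a+1) b 2 eb j = mfun a b 1 eb j := by
    intro j hj; simp only [mfun]; split_ifs <;> omega
  rw [tm, tm, hm i hi'.1]
  by_cases h2 : mfun a b 1 eb i = 2
  · rw [if_pos h2, if_pos h2]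
    have ha_mem : a ∈ (Finset.Icc a b).erase i := by
      rw [Finset.mem_erase]
      constructor
      · omega
      · exact Finset.mem_Icc.mpr ⟨le_refl a, le_of_lt hab⟩
    rw [← Finset.mul_prod_erase _ _ ha_mem]
    have e1 : mfun a b 1 eb a = 1 := by simp only [mfun]; split_ifs <;> omega
    rw [e1, pow_one]
    have hset : ((Finset.Icc a b).erase i).erase a = (Finset.Icc (a+1) b).erase i := by
      ext x; simp; omega
    rw [hset]
    have eQ : ∏ j ∈ (Finset.Icc (a+1) b).erase i, (z i - z j) ^ mfun (a+1) b 2 eb j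
        = ∏ j ∈ (Finset.Icc (a+1) b).erase i, (z i - z j) ^ mfun a b 1 eb j := by
      apply Finset.prod_congr rfl
      intro j hj
      have : a + 1 ≤ j := by
        have := Finset.mem_Icc.mp (Finset.mem_of_mem_erase hj); omega
      rw [hm j this]
    rw [← eQ]
    exact (canc1 _ _ _ (hne i (by rw [hIcc]; exact Finset.mem_insert_of_mem hi) (by omega))).symm
  · rw [if_neg h2, if_neg h2, mul_zero]

lemma sumL3 (z β : ℕ → ℂ) {a b : ℕ} (ea : ℕ) (hab : a < b)
    (hne : ∀ i ∈ Finset.Icc a b, i ≠ b → z i - z b ≠ 0) :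
    SS z β a b ea 1 = ∑ i ∈ Finset.Icc a b, (z i - z b) * tm z β a b ea 2 i := by
  unfold SS
  apply Finset.sum_congr rfl
  intro i hi
  by_cases hib : i = b
  · have h1 : mfun a b ea 1 b = 1 := by simp only [mfun]; split_ifs <;> omega
    rw [hib]
    simp [tm, h1]
  · have hm : ∀ j, j ≠ b → mfun a b ea 1 j = mfun a b ea 2 j := by
      intro j hj; simp only [mfun]; split_ifs <;> omega
    rw [tm, tm, hm i hib]
    by_cases h2 : mfun a b ea 2 i = 2
    · rw [if_pos h2, if_pos h2]
      have hb_mem : b ∈ (Finset.Icc a b).erase i := by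
        rw [Finset.mem_erase]
        exact ⟨fun h => hib h.symm, Finset.mem_Icc.mpr ⟨le_of_lt hab, le_refl b⟩⟩
      rw [← Finset.mul_prod_erase _ _ hb_mem, ← Finset.mul_prod_erase _ _ hb_mem]
      have e1 : mfun a b ea 1 b = 1 := by simp only [mfun]; split_ifs <;> omega
      have e2 : mfun a b ea 2 b = 2 := by simp only [mfun]; split_ifs <;> omega
      rw [e1, e2]
      have eQ : ∏ j ∈ ((Finset.Icc a b).erase i).erase b, (z i - z j) ^ mfun a b ea 1 j
          = ∏ j ∈ ((Finset.Icc a b).erase i).erase b, (z i - z j) ^ mfun a b ea 2 j := by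
        apply Finset.prod_congr rfl
        intro j hj
        rw [hm j (Finset.mem_erase.mp hj).1]
      rw [eQ, pow_one]
      exact (canc2 _ _ _ (hne i hi hib)).symm
    · rw [if_neg h2, if_neg h2, mul_zero]

lemma sumL4 (z β : ℕ → ℂ) {a b : ℕ} (ea : ℕ) (hab : a + 1 < b)
    (hne : ∀ i ∈ Finset.Icc a b, i ≠ b → z i - z b ≠ 0) :
    SS z β a (b-1) ea 2 = ∑ i ∈ Finset.Icc a b, (z i - z b) * tm z β a b ea 1 i := by
  have hIcc : Finset.Icc a b = insert b (Finset.Icc a (b-1)) := by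
    ext x; simp; omega
  rw [hIcc, Finset.sum_insert (by simp; omega)]
  rw [sub_self, zero_mul, zero_add]
  unfold SS
  apply Finset.sum_congr rfl
  intro i hi
  have hi' : a ≤ i ∧ i ≤ b - 1 := Finset.mem_Icc.mp hi
  have hm : ∀ j, j ≤ b - 1 → mfun a (b-1) ea 2 j = mfun a b ea 1 j := by
    intro j hj; simp only [mfun]; split_ifs <;> omega
  rw [tm, tm, hm i hi'.2]
  by_cases h2 : mfun a b ea 1 i = 2
  · rw [if_pos h2, if_pos h2]
    have hb_mem : b ∈ (Finset.Icc a b).erase i := by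
      rw [Finset.mem_erase]
      constructor
      · omega
      · exact Finset.mem_Icc.mpr ⟨by omega, le_refl b⟩
    rw [← Finset.mul_prod_erase _ _ hb_mem]
    have e1 : mfun a b ea 1 b = 1 := by simp only [mfun]; split_ifs <;> omega
    rw [e1, pow_one]
    have hset : ((Finset.Icc a b).erase i).erase b = (Finset.Icc a (b-1)).erase i := by
      ext x; simp; omega
    rw [hset]
    have eQ : ∏ j ∈ (Finset.Icc a (b-1)).erase i, (z i - z j) ^ mfun a (b-1) ea 2 j
        = ∏ j ∈ (Finset.Icc a (b-1)).erase i, (z i - z j) ^ mfun a b ea 1 j := by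
      apply Finset.prod_congr rfl
      intro j hj
      have : j ≤ b - 1 := by
        have := Finset.mem_Icc.mp (Finset.mem_of_mem_erase hj); omega
      rw [hm j this]
    rw [← eQ]
    exact (canc1 _ _ _ (hne i (by rw [hIcc]; exact Finset.mem_insert_of_mem hi) (by omega))).symm
  · rw [if_neg h2, if_neg h2, mul_zero]

lemma key (n : ℕ) (z β : ℕ → ℂ) (g d : ℂ → ℂ)
    (hz : ∀ i < n, ∀ j < n, z i = z j → i = j)
    (hg : ∀ i < n, g (z i) = 0) (hd : ∀ i < n, d (z i) = β i) :
    ∀ (N a b ea eb : ℕ), ea + eb + 2 * (b - a) ≤ N → a ≤ b → b < n →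
      (ea = 1 ∨ ea = 2) → (eb = 1 ∨ eb = 2) →
      dd g d (LL z a b ea eb) = SS z β a b ea eb := by
  intro N
  induction N with
  | zero => intro a b ea eb hN hab hbn hea heb; omega
  | succ N ih =>
    intro a b ea eb hN hab hbn hea heb
    have hzne : ∀ i j, i ≤ b → j ≤ b → i ≠ j → z i - z j ≠ 0 := by
      intro i j hi hj hij
      exact sub_ne_zero.mpr fun h => hij (hz i (by omega) j (by omega) h)
    rcases eq_or_lt_of_le hab with rfl | hlt
    · -- a = b
      rw [LL_self]
      have hIcc : Finset.Icc a a = {a} := Finset.Icc_self a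
      rcases heb with rfl | rfl
      · rw [show List.replicate 1 (z a) = [z a] from rfl]
        unfold SS
        rw [hIcc, Finset.sum_singleton]
        have hm : mfun a a ea 1 a = 1 := by simp [mfun]
        rw [tm, hm, dd]
        simp [hg a (by omega)]
      · rw [show List.replicate 2 (z a) = [z a, z a] from rfl]
        unfold SS
        rw [hIcc, Finset.sum_singleton]
        have hm : mfun a a ea 2 a = 2 := by simp [mfun]
        rw [tm, hm, dd]
        simp [hd a (by omega), Finset.erase_singleton]
    · -- a < b
      have hzab : z b - z a ≠ 0 := hzne b a (le_refl b) (le_of_lt hlt) (by omega)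
      rcases eq_or_lt_of_le (show a + 1 ≤ b by omega) with hb1 | hb2
      · -- b = a + 1 : finite cases
        subst hb1
        have hzz : z a ≠ z (a+1) := fun h => by
          have := hz a (by omega) (a+1) (by omega) h; omega
        have hzz' : z (a+1) - z a ≠ 0 := sub_ne_zero.mpr fun h => hzz h.symm
        have hzz'' : z a - z (a+1) ≠ 0 := sub_ne_zero.mpr hzz
        have hga : g (z a) = 0 := hg a (by omega)
        have hgb : g (z (a+1)) = 0 := hg (a+1) (by omega)
        have hda : d (z a) = β a := hd a (by omega)
        have hdb : d (z (a+1)) = β (a+1) := hd (a+1) (by omega)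
        have he1 : (Finset.Icc a (a+1)).erase a = {a+1} := by ext x; simp <;> omega
        have he2 : (Finset.Icc a (a+1)).erase (a+1) = {a} := by ext x; simp <;> omega
        have hIcc : Finset.Icc a (a+1) = {a, a+1} := by ext x; simp <;> omega
        have hma : mfun a (a+1) ea eb a = ea := by simp only [mfun]; split_ifs <;> omega
        have hmb : mfun a (a+1) ea eb (a+1) = eb := by simp only [mfun]; split_ifs <;> omega
        have hSS : SS z β a (a+1) ea eb
            = (if ea = 2 then β a / (z a - z (a+1)) ^ eb else 0)
              + (if eb = 2 then β (a+1) / (z (a+1) - z a) ^ ea else 0) := by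
          unfold SS
          rw [hIcc, Finset.sum_pair (by omega)]
          simp only [tm, hma, hmb, he1, he2, Finset.prod_singleton]
        rw [LL_front z ea eb hlt, LL_self, hSS]
        rcases hea with rfl | rfl <;> rcases heb with rfl | rfl <;>
          · simp only [show (2:ℕ) = 1 + 1 from rfl, List.replicate_succ,
              List.replicate_zero, List.cons_append, List.nil_append]
            simp [dd, hzz, hga, hgb, hda, hdb]
            try field_simp
            try ring
      · -- a + 1 < b : recursive case
        -- tail computation
        have htail : dd g d ((LL z a b ea eb).tail)
            = ∑ i ∈ Finset.Icc a b, (z i - z a) * tm z β a b ea eb i := by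
          rcases hea with rfl | rfl
          · rw [LL_tail1 z eb hlt,
              ih (a+1) b 2 eb (by omega) (by omega) hbn (Or.inr rfl) heb]
            exact sumL2 z β eb hlt (fun i hi hne2 =>
              hzne i a (Finset.mem_Icc.mp hi).2 (le_of_lt hlt) hne2)
          · rw [LL_tail2 z eb hlt,
              ih a b 1 eb (by omega) (by omega) hbn (Or.inl rfl) heb]
            exact sumL1 z β eb hlt (fun i hi hne2 =>
              hzne i a (Finset.mem_Icc.mp hi).2 (le_of_lt hlt) hne2)
        have hdrop : dd g d ((LL z a b ea eb).dropLast)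
            = ∑ i ∈ Finset.Icc a b, (z i - z b) * tm z β a b ea eb i := by
          rcases heb with rfl | rfl
          · rw [LL_dropLast1 z ea hb2,
              ih a (b-1) ea 2 (by omega) (by omega) (by omega) hea (Or.inr rfl)]
            exact sumL4 z β ea hb2 (fun i hi hne2 =>
              hzne i b (Finset.mem_Icc.mp hi).2 (le_refl b) hne2)
          · rw [LL_dropLast2 z ea hb2,
              ih a b ea 1 (by omega) (by omega) hbn hea (Or.inl rfl)]
            exact sumL3 z β ea hlt (fun i hi hne2 =>
              hzne i b (Finset.mem_Icc.mp hi).2 (le_refl b) hne2)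
        -- cons form
        have hcons : ∃ (y u : ℂ) (t : List ℂ), LL z a b ea eb = z a :: y :: u :: t := by
          rcases hea with rfl | rfl
          · exact ⟨z (a+1), z (a+1), LL z (a+2) b 2 eb, by
              rw [LL_front z 1 eb hlt, LL_front z 2 eb (by omega)]; rfl⟩
          · exact ⟨z a, z (a+1), z (a+1) :: LL z (a+2) b 2 eb, by
              rw [LL_front z 2 eb hlt, LL_front z 2 eb (by omega)]; rfl⟩
        obtain ⟨y, u, t, hL⟩ := hcons
        have hgl : (z a :: y :: u :: t : List ℂ).getLast? = some (z b) := by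
          rw [← hL]; exact LL_getLast? z (le_of_lt hlt) heb
        have hstep := dd_rec g d (z a) y u t (z b) hgl
        have ht' : (y :: u :: t : List ℂ) = (LL z a b ea eb).tail := by rw [hL]; rfl
        have hd' : ((z a :: y :: u :: t : List ℂ)).dropLast = (LL z a b ea eb).dropLast := by
          rw [hL]
        rw [hL, hstep, hd', ht', htail, hdrop, ← Finset.sum_sub_distrib]
        have hcomb : ∀ i ∈ Finset.Icc a b,
            (z i - z a) * tm z β a b ea eb i - (z i - z b) * tm z β a b ea eb i
              = (z b - z a) * tm z β a b ea eb i := by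
          intro i _; ring
        rw [Finset.sum_congr rfl hcomb, ← Finset.mul_sum]
        rw [mul_comm, mul_div_assoc, div_self hzab, mul_one]
        rfl


/-- Statement (5): for fixed points `z i` of `p` with multipliers `α i`,
`f[z₁,z₁,…,z_k,z_k] = Σ (αᵢ - 1)/πᵢᵏ`. (Indices `0,…,k-1`.) -/
theorem divided_difference_doubled_nodes (n : ℕ) (p : ℂ[X]) (z : ℕ → ℂ)
    (hz : ∀ i < n, ∀ j < n, z i = z j → i = j)
    (hfix : ∀ i < n, p.eval (z i) = z i)
    (α : ℕ → ℂ) (hα : ∀ i < n, p.derivative.eval (z i) = α i) :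
    ∀ k, 2 ≤ k → k ≤ n →
      dd (fun w => p.eval w) (fun w => p.derivative.eval w)
          ((List.range k).flatMap fun i => [z i, z i]) =
        ∑ i ∈ Finset.range k,
          (α i - 1) / ∏ j ∈ (Finset.range k).erase i, (z i - z j) ^ 2 := by
  intro k hk2 hkn
  have hlen0 : ∀ m : ℕ, ((List.range m).flatMap fun i => [z i, z i]).length = 2 * m := by
    intro m
    induction m with
    | zero => simp
    | succ m ihm =>
      rw [List.range_succ, List.flatMap_append, List.length_append, ihm,
        show ([m].flatMap fun i => [z i, z i]) = [z m, z m] by simp]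
      simp only [List.length_cons, List.length_nil]
      omega
  have hlen : ((List.range k).flatMap fun i => [z i, z i]).length = 2 * k := hlen0 k
  have hlist : ((List.range k).flatMap fun i => [z i, z i]) = LL z 0 (k-1) 2 2 := by
    unfold LL
    have h1 : (k-1) + 1 - 0 = k := by omega
    rw [h1, List.range_eq_range']
    apply flatMap_congr'
    intro i hi
    have hm : mfun 0 (k-1) 2 2 i = 2 := by simp only [mfun]; split_ifs <;> rfl
    rw [hm]
    rfl
  have keyres := key n z (fun i => α i - 1) (fun w => p.eval w - w)
    (fun w => p.derivative.eval w - 1) hz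
    (fun i hi => by show eval (z i) p - z i = 0; rw [hfix i hi]; ring)
    (fun i hi => by show eval (z i) (derivative p) - 1 = α i - 1; rw [hα i hi])
    (2 + 2 + 2 * ((k-1) - 0)) 0 (k-1) 2 2 le_rfl (by omega) (by omega)
    (Or.inr rfl) (Or.inr rfl)
  have hsub := dd_sub (fun w => p.eval w) (fun w => p.derivative.eval w)
    (fun w => w) (fun _ => (1:ℂ)) (2 * k) (LL z 0 (k-1) 2 2)
    (by rw [← hlist, hlen])
  have hid := dd_id (2 * k) (LL z 0 (k-1) 2 2) (by rw [← hlist, hlen])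
    (by rw [← hlist, hlen]; omega)
  rw [hlist]
  have hdd : dd (fun w => p.eval w) (fun w => p.derivative.eval w) (LL z 0 (k-1) 2 2)
      = SS z (fun i => α i - 1) 0 (k-1) 2 2 := by
    rw [hid, sub_zero] at hsub
    rw [← hsub]
    exact keyres
  rw [hdd]
  unfold SS
  have hIcc : Finset.Icc 0 (k-1) = Finset.range k := by ext x; simp; omega
  rw [hIcc]
  apply Finset.sum_congr rfl
  intro i hi
  rw [tm]
  have hm : ∀ j, mfun 0 (k-1) 2 2 j = 2 := by
    intro j; simp only [mfun]; split_ifs <;> rfl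
  rw [hm, if_pos rfl, hIcc]
  apply congrArg
  apply Finset.prod_congr rfl
  intro j _
  rw [hm]
end

section
/- Let z₁, …, zₙ be distinct complex numbers with p(zᵢ) = zᵢ and p'(zᵢ) = αᵢ. For each k with 2 ≤ k ≤ n - 1, the divided difference satisfies f[z₁, z₂, z₂, …, z_k, z_k, z_{k+1}] = Σ_{i=2}^{k} (αᵢ - 1)(zᵢ - z₁)(zᵢ - z_{k+1})/π^{k+1}_i, where π^{k+1}_i = ∏_{j=1, j≠i}^{k+1} (zᵢ - zⱼ)². -/
open Polynomial Finset

/-- The doubled-node list `[z s, z s, z (s+1), z (s+1), …]` of `m` doubled nodes. -/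
def dl (z : ℕ → ℂ) (s m : ℕ) : List ℂ := (List.range' s m).flatMap fun i => [z i, z i]

lemma dl_succ (z : ℕ → ℂ) (s m : ℕ) : dl z s (m + 1) = z s :: z s :: dl z (s + 1) m := by
  simp [dl, List.range'_succ]

lemma dl_concat (z : ℕ → ℂ) (s m : ℕ) :
    dl z s (m + 1) = dl z s m ++ [z (s + m), z (s + m)] := by
  simp [dl, List.range'_concat]

lemma dd_eq (g d : ℂ → ℂ) (x y : ℂ) (l : List ℂ) (hl : l ≠ []) :
    dd g d (x :: y :: l) =
      (dd g d (y :: l) - dd g d ((x :: y :: l).dropLast)) / (l.getLast hl - x) := by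
  match l with
  | [] => exact absurd rfl hl
  | u :: rest => rw [dd]

lemma dd_eq' (g d : ℂ → ℂ) (x y c : ℂ) (l : List ℂ) :
    dd g d (x :: y :: (l ++ [c])) =
      (dd g d (y :: (l ++ [c])) - dd g d (x :: y :: l)) / (c - x) := by
  rw [dd_eq g d x y (l ++ [c]) (by simp)]
  rw [List.getLast_concat]
  congr 2
  rw [show x :: y :: (l ++ [c]) = (x :: y :: l) ++ [c] by simp, List.dropLast_concat]

lemma erase_Ico_bot (s t : ℕ) : (Finset.Ico s t).erase s = Finset.Ico (s + 1) t := by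
  ext j; simp only [Finset.mem_erase, Finset.mem_Ico]; omega

lemma erase_Ico_top (s t : ℕ) : (Finset.Ico s (t + 1)).erase t = Finset.Ico s t := by
  ext j; simp only [Finset.mem_erase, Finset.mem_Ico]; omega

lemma prod_split_bot (z : ℕ → ℂ) (s t i : ℕ) (h1 : s < i) (h2 : i < t) :
    ∏ j ∈ (Finset.Ico s t).erase i, (z i - z j) ^ 2
      = (z i - z s) ^ 2 * ∏ j ∈ (Finset.Ico (s + 1) t).erase i, (z i - z j) ^ 2 := by
  have h : (Finset.Ico s t).erase i = insert s ((Finset.Ico (s + 1) t).erase i) := by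
    ext j; simp only [Finset.mem_erase, Finset.mem_Ico, Finset.mem_insert]; omega
  rw [h, Finset.prod_insert (by simp only [Finset.mem_erase, Finset.mem_Ico]; omega)]

lemma prod_split_top (z : ℕ → ℂ) (s t i : ℕ) (h1 : s ≤ i) (h2 : i < t) :
    ∏ j ∈ (Finset.Ico s (t + 1)).erase i, (z i - z j) ^ 2
      = (z i - z t) ^ 2 * ∏ j ∈ (Finset.Ico s t).erase i, (z i - z j) ^ 2 := by
  have h : (Finset.Ico s (t + 1)).erase i = insert t ((Finset.Ico s t).erase i) := by
    ext j; simp only [Finset.mem_erase, Finset.mem_Ico, Finset.mem_insert]; omega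
  rw [h, Finset.prod_insert (by simp only [Finset.mem_erase, Finset.mem_Ico]; omega)]

lemma nz2 (u P : ℂ) (hu : u ≠ 0) (hP : P ≠ 0) : u ^ 2 * P ≠ 0 :=
  mul_ne_zero (pow_ne_zero 2 hu) hP

lemma alg1 (β u v P d : ℂ) (hu : u ≠ 0) (hv : v ≠ 0) (hP : P ≠ 0) (hd : d ≠ 0)
    (h : u - v = d) :
    β / (u ^ 2 * (v ^ 2 * P)) = (β / (u * (v ^ 2 * P)) - β / (v * (u ^ 2 * P))) / d := by
  subst h
  have h1 : u * (v ^ 2 * P) ≠ 0 := mul_ne_zero hu (nz2 v P hv hP)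
  have h2 : v * (u ^ 2 * P) ≠ 0 := mul_ne_zero hv (nz2 u P hu hP)
  have h3 : u ^ 2 * (v ^ 2 * P) ≠ 0 := nz2 u _ hu (nz2 v P hv hP)
  rw [eq_div_iff hd, div_sub_div _ _ h1 h2, div_mul_eq_mul_div,
    div_eq_div_iff h3 (mul_ne_zero h1 h2)]
  ring

lemma alg2 (β d P : ℂ) (hd : d ≠ 0) (hP : P ≠ 0) :
    β / (d ^ 2 * P) = (β / (d * P)) / d := by
  rw [eq_div_iff hd, div_mul_eq_mul_div,
    div_eq_div_iff (nz2 d P hd hP) (mul_ne_zero hd hP)]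
  ring

lemma alg3 (β e P d : ℂ) (he : e ≠ 0) (hP : P ≠ 0) (hd : d ≠ 0) (h : e = -d) :
    β / (e ^ 2 * P) = (-(β / (e * P))) / d := by
  rw [eq_div_iff hd, ← neg_div, div_mul_eq_mul_div,
    div_eq_div_iff (nz2 e P he hP) (mul_ne_zero he hP)]
  subst h
  ring

lemma alg4 (β u v P d : ℂ) (hu : u ≠ 0) (hv : v ≠ 0) (hP : P ≠ 0) (hd : d ≠ 0)
    (h : u - v = d) :
    β / (v * (u ^ 2 * P)) = (β / (u * (v * P)) - β / (u ^ 2 * P)) / d := by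
  subst h
  have h1 : u * (v * P) ≠ 0 := mul_ne_zero hu (mul_ne_zero hv hP)
  have h2 : u ^ 2 * P ≠ 0 := nz2 u P hu hP
  have h3 : v * (u ^ 2 * P) ≠ 0 := mul_ne_zero hv h2
  rw [eq_div_iff hd, div_sub_div _ _ h1 h2, div_mul_eq_mul_div,
    div_eq_div_iff h3 (mul_ne_zero h1 h2)]
  ring

lemma alg5 (β e P d : ℂ) (he : e ≠ 0) (hP : P ≠ 0) (hd : d ≠ 0) (h : e = -d) :
    β / (e * P) = (-(β / P)) / d := by
  rw [eq_div_iff hd, ← neg_div, div_mul_eq_mul_div,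
    div_eq_div_iff (mul_ne_zero he hP) hP]
  subst h
  ring

lemma alg6 (β u v P d : ℂ) (hu : u ≠ 0) (hv : v ≠ 0) (hP : P ≠ 0) (hd : d ≠ 0)
    (h : u - v = d) :
    β / (u * (v ^ 2 * P)) = (β / (v ^ 2 * P) - β / (u * (v * P))) / d := by
  subst h
  have h1 : v ^ 2 * P ≠ 0 := nz2 v P hv hP
  have h2 : u * (v * P) ≠ 0 := mul_ne_zero hu (mul_ne_zero hv hP)
  have h3 : u * (v ^ 2 * P) ≠ 0 := mul_ne_zero hu h1
  rw [eq_div_iff hd, div_sub_div _ _ h1 h2, div_mul_eq_mul_div,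
    div_eq_div_iff h3 (mul_ne_zero h1 h2)]
  ring

lemma alg7 (β d P : ℂ) (hd : d ≠ 0) (hP : P ≠ 0) :
    β / (d * P) = (β / P) / d := by
  rw [div_div, mul_comm]

lemma alg8 (β u v P d : ℂ) (hu : u ≠ 0) (hv : v ≠ 0) (hP : P ≠ 0) (hd : d ≠ 0)
    (h : u - v = d) :
    β / (u * (v * P)) = (β / (v * P) - β / (u * P)) / d := by
  subst h
  have h1 : v * P ≠ 0 := mul_ne_zero hv hP
  have h2 : u * P ≠ 0 := mul_ne_zero hu hP
  have h3 : u * (v * P) ≠ 0 := mul_ne_zero hu h1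
  rw [eq_div_iff hd, div_sub_div _ _ h1 h2, div_mul_eq_mul_div,
    div_eq_div_iff h3 (mul_ne_zero h1 h2)]
  ring

lemma alg9 (β u v P : ℂ) (hu : u ≠ 0) (hv : v ≠ 0) (hP : P ≠ 0) :
    β / (u * (v * P)) = β * u * v / (u ^ 2 * (v ^ 2 * P)) := by
  rw [div_eq_div_iff (mul_ne_zero hu (mul_ne_zero hv hP))
    (nz2 u _ hu (nz2 v P hv hP))]
  ring

lemma master (n : ℕ) (p : ℂ[X]) (z : ℕ → ℂ)
    (hz : ∀ i < n, ∀ j < n, z i = z j → i = j)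
    (hfix : ∀ i < n, p.eval (z i) = z i)
    (α : ℕ → ℂ) (hα : ∀ i < n, p.derivative.eval (z i) = α i) :
    ∀ m, 1 ≤ m →
      (∀ s b, s + m ≤ b → b < n →
          dd (fun w => p.eval w) (fun w => p.derivative.eval w) (dl z s m ++ [z b]) =
            ∑ i ∈ Finset.Ico s (s + m), (α i - 1) /
              ((z i - z b) * ∏ j ∈ (Finset.Ico s (s + m)).erase i, (z i - z j) ^ 2)) ∧
      (∀ a s, a < s → s + m ≤ n →
          dd (fun w => p.eval w) (fun w => p.derivative.eval w) (z a :: dl z s m) =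
            ∑ i ∈ Finset.Ico s (s + m), (α i - 1) /
              ((z i - z a) * ∏ j ∈ (Finset.Ico s (s + m)).erase i, (z i - z j) ^ 2)) ∧
      (∀ a s b, a < s → s + m ≤ b → b < n →
          dd (fun w => p.eval w) (fun w => p.derivative.eval w)
              (z a :: (dl z s m ++ [z b])) =
            ∑ i ∈ Finset.Ico s (s + m), (α i - 1) /
              ((z i - z a) * ((z i - z b) *
                ∏ j ∈ (Finset.Ico s (s + m)).erase i, (z i - z j) ^ 2))) ∧
      (2 ≤ m → ∀ s, s + m ≤ n →
          dd (fun w => p.eval w) (fun w => p.derivative.eval w) (dl z s m) =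
            ∑ i ∈ Finset.Ico s (s + m), (α i - 1) /
              ∏ j ∈ (Finset.Ico s (s + m)).erase i, (z i - z j) ^ 2) := by
  have hne : ∀ i j, i < n → j < n → i ≠ j → z i - z j ≠ 0 := by
    intro i j hi hj hij
    exact sub_ne_zero_of_ne fun h => hij (hz i hi j hj h)
  have hPne : ∀ s t i, t ≤ n → i < n →
      (∏ j ∈ (Finset.Ico s t).erase i, (z i - z j) ^ 2) ≠ 0 := by
    intro s t i ht hi
    refine Finset.prod_ne_zero_iff.mpr ?_
    intro j hj
    rw [Finset.mem_erase, Finset.mem_Ico] at hj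
    exact pow_ne_zero _ (hne i j hi (lt_of_lt_of_le hj.2.2 ht) (Ne.symm hj.1))
  have dd2 : ∀ i j, i < n → j < n → i ≠ j →
      dd (fun w => p.eval w) (fun w => p.derivative.eval w) [z i, z j] = 1 := by
    intro i j hi hj hij
    rw [dd, if_neg (fun h => hij (hz i hi j hj h))]
    show (p.eval (z j) - p.eval (z i)) / (z j - z i) = 1
    rw [hfix i hi, hfix j hj, div_self (hne j i hj hi (Ne.symm hij))]
  have dd2' : ∀ i, i < n →
      dd (fun w => p.eval w) (fun w => p.derivative.eval w) [z i, z i] = α i := by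
    intro i hi
    rw [dd, if_pos rfl]
    exact hα i hi
  have dl1 : ∀ s, dl z s 1 = [z s, z s] := fun s => by simp [dl]
  intro m hm
  induction m, hm using Nat.le_induction with
  | base =>
    have hIco : ∀ s : ℕ, Finset.Ico s (s + 1) = {s} := fun s => by
      ext j; simp only [Finset.mem_Ico, Finset.mem_singleton]; omega
    have hB : ∀ s b, s + 1 ≤ b → b < n →
        dd (fun w => p.eval w) (fun w => p.derivative.eval w) (dl z s 1 ++ [z b]) =
          ∑ i ∈ Finset.Ico s (s + 1), (α i - 1) /
            ((z i - z b) * ∏ j ∈ (Finset.Ico s (s + 1)).erase i, (z i - z j) ^ 2) := by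
      intro s b hsb hbn
      have hsn : s < n := by omega
      have e : dl z s 1 ++ [z b] = z s :: z s :: (([] : List ℂ) ++ [z b]) := by
        simp [dl1]
      rw [e, dd_eq', List.nil_append, dd2 s b hsn hbn (by omega), dd2' s hsn,
        hIco s, Finset.sum_singleton, Finset.erase_singleton, Finset.prod_empty]
      have h1 : z b - z s ≠ 0 := hne b s hbn hsn (by omega)
      have h2 : z s - z b ≠ 0 := hne s b hsn hbn (by omega)
      field_simp
      ring
    have hC : ∀ a s, a < s → s + 1 ≤ n →
        dd (fun w => p.eval w) (fun w => p.derivative.eval w) (z a :: dl z s 1) =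
          ∑ i ∈ Finset.Ico s (s + 1), (α i - 1) /
            ((z i - z a) * ∏ j ∈ (Finset.Ico s (s + 1)).erase i, (z i - z j) ^ 2) := by
      intro a s has hsn'
      have hsn : s < n := by omega
      have han : a < n := by omega
      have e : z a :: dl z s 1 = z a :: z s :: (([] : List ℂ) ++ [z s]) := by
        simp [dl1]
      rw [e, dd_eq', List.nil_append, dd2' s hsn, dd2 a s han hsn (by omega),
        hIco s, Finset.sum_singleton, Finset.erase_singleton, Finset.prod_empty]
      have h1 : z s - z a ≠ 0 := hne s a hsn han (by omega)
      field_simp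
    refine ⟨hB, hC, ?_, by omega⟩
    -- A(1)
    intro a s b has hsb hbn
    have hsn : s < n := by omega
    have han : a < n := by omega
    have e : z a :: (dl z s 1 ++ [z b]) = z a :: z s :: ([z s] ++ [z b]) := by
      simp [dl1]
    have e1 : z s :: ([z s] ++ [z b]) = dl z s 1 ++ [z b] := by simp [dl1]
    have e2 : z a :: z s :: [z s] = z a :: dl z s 1 := by simp [dl1]
    rw [e, dd_eq', e1, e2, hB s b hsb hbn, hC a s has (by omega)]
    rw [hIco s, Finset.sum_singleton, Finset.sum_singleton, Finset.sum_singleton,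
      Finset.erase_singleton, Finset.prod_empty]
    have h1 : z s - z a ≠ 0 := hne s a hsn han (by omega)
    have h2 : z s - z b ≠ 0 := hne s b hsn hbn (by omega)
    have h3 : z b - z a ≠ 0 := hne b a hbn han (by omega)
    field_simp
    ring
  | succ m hm IH =>
    obtain ⟨m', rfl⟩ : ∃ m'', m = m'' + 1 := ⟨m - 1, by omega⟩
    obtain ⟨hIB, hIC, hIA, hID⟩ := IH
    -- D(m'+2)
    have hD2 : ∀ s, s + (m' + 1 + 1) ≤ n →
        dd (fun w => p.eval w) (fun w => p.derivative.eval w) (dl z s (m' + 1 + 1)) =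
          ∑ i ∈ Finset.Ico s (s + (m' + 1 + 1)), (α i - 1) /
            ∏ j ∈ (Finset.Ico s (s + (m' + 1 + 1))).erase i, (z i - z j) ^ 2 := by
      intro s hsn
      set q := s + (m' + 1) with hq
      have e : dl z s (m' + 1 + 1)
          = z s :: z s :: ((dl z (s + 1) m' ++ [z q]) ++ [z q]) := by
        rw [dl_succ, dl_concat, show s + 1 + m' = q by omega]
        simp
      have e1 : z s :: ((dl z (s + 1) m' ++ [z q]) ++ [z q])
          = z s :: dl z (s + 1) (m' + 1) := by
        rw [dl_concat, show s + 1 + m' = q by omega]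
        simp
      have e2 : z s :: z s :: (dl z (s + 1) m' ++ [z q])
          = dl z s (m' + 1) ++ [z q] := by
        rw [dl_succ]
        simp
      rw [e, dd_eq', e1, e2]
      rw [hIC s (s + 1) (by omega) (by omega)]
      rw [hIB s q (by omega) (by omega)]
      have eub : s + 1 + (m' + 1) = q + 1 := by omega
      have eub2 : s + (m' + 1 + 1) = q + 1 := by omega
      rw [eub, eub2]
      rw [Finset.sum_Ico_succ_top (by omega : s + 1 ≤ q)
        (fun i => (α i - 1) / ((z i - z s) *
          ∏ j ∈ (Finset.Ico (s + 1) (q + 1)).erase i, (z i - z j) ^ 2))]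
      rw [Finset.sum_eq_sum_Ico_succ_bot (by omega : s < q)
        (fun i => (α i - 1) / ((z i - z q) *
          ∏ j ∈ (Finset.Ico s q).erase i, (z i - z j) ^ 2))]
      rw [Finset.sum_Ico_succ_top (by omega : s ≤ q)
        (fun i => (α i - 1) / ∏ j ∈ (Finset.Ico s (q + 1)).erase i, (z i - z j) ^ 2)]
      rw [Finset.sum_eq_sum_Ico_succ_bot (by omega : s < q)
        (fun i => (α i - 1) / ∏ j ∈ (Finset.Ico s (q + 1)).erase i, (z i - z j) ^ 2)]
      have hqn : q < n := by omega
      have hsn' : s < n := by omega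
      have hd : z q - z s ≠ 0 := hne q s hqn hsn' (by omega)
      have hkey : (∑ i ∈ Finset.Ico (s + 1) q, (α i - 1) /
            ∏ j ∈ (Finset.Ico s (q + 1)).erase i, (z i - z j) ^ 2)
          = ((∑ i ∈ Finset.Ico (s + 1) q, (α i - 1) / ((z i - z s) *
              ∏ j ∈ (Finset.Ico (s + 1) (q + 1)).erase i, (z i - z j) ^ 2))
            - ∑ i ∈ Finset.Ico (s + 1) q, (α i - 1) / ((z i - z q) *
              ∏ j ∈ (Finset.Ico s q).erase i, (z i - z j) ^ 2)) / (z q - z s) := by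
        rw [← Finset.sum_sub_distrib, Finset.sum_div]
        refine Finset.sum_congr rfl fun i hi => ?_
        rw [Finset.mem_Ico] at hi
        have hin : i < n := by omega
        rw [prod_split_bot z s (q + 1) i (by omega) (by omega),
          prod_split_top z (s + 1) q i (by omega) (by omega),
          prod_split_bot z s q i (by omega) (by omega)]
        have h1 : z i - z s ≠ 0 := hne i s hin hsn' (by omega)
        have h2 : z i - z q ≠ 0 := hne i q hin hqn (by omega)
        have h3 : (∏ j ∈ (Finset.Ico (s + 1) q).erase i, (z i - z j) ^ 2) ≠ 0 :=
          hPne (s + 1) q i (by omega) hin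
        exact alg1 (α i - 1) (z i - z s) (z i - z q) _ _ h1 h2 h3 hd (by ring)
      rw [hkey]
      have htop : (α q - 1) / ∏ j ∈ (Finset.Ico s (q + 1)).erase q, (z q - z j) ^ 2
          = ((α q - 1) / ((z q - z s) *
              ∏ j ∈ (Finset.Ico (s + 1) (q + 1)).erase q, (z q - z j) ^ 2))
            / (z q - z s) := by
        rw [prod_split_bot z s (q + 1) q (by omega) (by omega), erase_Ico_top (s + 1) q]
        have h3 : (∏ j ∈ Finset.Ico (s + 1) q, (z q - z j) ^ 2) ≠ 0 := by
          refine Finset.prod_ne_zero_iff.mpr fun j hj => ?_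
          rw [Finset.mem_Ico] at hj
          exact pow_ne_zero _ (hne q j hqn (by omega) (by omega))
        exact alg2 (α q - 1) (z q - z s) _ hd h3
      rw [htop]
      have hbot : (α s - 1) / ∏ j ∈ (Finset.Ico s (q + 1)).erase s, (z s - z j) ^ 2
          = (-((α s - 1) / ((z s - z q) *
              ∏ j ∈ (Finset.Ico s q).erase s, (z s - z j) ^ 2)))
            / (z q - z s) := by
        rw [erase_Ico_bot s (q + 1), erase_Ico_bot s q]
        rw [show Finset.Ico (s + 1) (q + 1)
            = insert q (Finset.Ico (s + 1) q) from by
          ext j; simp only [Finset.mem_Ico, Finset.mem_insert]; omega]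
        rw [Finset.prod_insert (by simp only [Finset.mem_Ico]; omega)]
        have h2 : z s - z q ≠ 0 := hne s q hsn' hqn (by omega)
        have h3 : (∏ j ∈ Finset.Ico (s + 1) q, (z s - z j) ^ 2) ≠ 0 := by
          refine Finset.prod_ne_zero_iff.mpr fun j hj => ?_
          rw [Finset.mem_Ico] at hj
          exact pow_ne_zero _ (hne s j hsn' (by omega) (by omega))
        exact alg3 (α s - 1) (z s - z q) _ (z q - z s) h2 h3 hd (by ring)
      rw [hbot]
      ring
    -- B(m'+2)
    have hB2 : ∀ s b, s + (m' + 1 + 1) ≤ b → b < n →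
        dd (fun w => p.eval w) (fun w => p.derivative.eval w)
            (dl z s (m' + 1 + 1) ++ [z b]) =
          ∑ i ∈ Finset.Ico s (s + (m' + 1 + 1)), (α i - 1) /
            ((z i - z b) *
              ∏ j ∈ (Finset.Ico s (s + (m' + 1 + 1))).erase i, (z i - z j) ^ 2) := by
      intro s b hsb hbn
      have e : dl z s (m' + 1 + 1) ++ [z b]
          = z s :: z s :: (dl z (s + 1) (m' + 1) ++ [z b]) := by
        rw [dl_succ]; simp
      have e1 : z s :: (dl z (s + 1) (m' + 1) ++ [z b])
          = z s :: (dl z (s + 1) (m' + 1) ++ [z b]) := rfl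
      have e2 : z s :: z s :: dl z (s + 1) (m' + 1) = dl z s (m' + 1 + 1) :=
        (dl_succ z s (m' + 1)).symm
      rw [e, dd_eq', e2]
      rw [hIA s (s + 1) b (by omega) (by omega) hbn]
      rw [hD2 s (by omega)]
      have eub : s + 1 + (m' + 1) = s + (m' + 1) + 1 := by omega
      have eub2 : s + (m' + 1 + 1) = s + (m' + 1) + 1 := by omega
      rw [eub, eub2]
      set q := s + (m' + 1) with hq
      rw [Finset.sum_eq_sum_Ico_succ_bot (by omega : s < q + 1)
        (fun i => (α i - 1) /
          ∏ j ∈ (Finset.Ico s (q + 1)).erase i, (z i - z j) ^ 2)]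
      rw [Finset.sum_eq_sum_Ico_succ_bot (by omega : s < q + 1)
        (fun i => (α i - 1) / ((z i - z b) *
          ∏ j ∈ (Finset.Ico s (q + 1)).erase i, (z i - z j) ^ 2))]
      have hsn' : s < n := by omega
      have hd : z b - z s ≠ 0 := hne b s hbn hsn' (by omega)
      have hkey : (∑ i ∈ Finset.Ico (s + 1) (q + 1), (α i - 1) / ((z i - z b) *
            ∏ j ∈ (Finset.Ico s (q + 1)).erase i, (z i - z j) ^ 2))
          = ((∑ i ∈ Finset.Ico (s + 1) (q + 1), (α i - 1) / ((z i - z s) *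
              ((z i - z b) *
                ∏ j ∈ (Finset.Ico (s + 1) (q + 1)).erase i, (z i - z j) ^ 2)))
            - ∑ i ∈ Finset.Ico (s + 1) (q + 1), (α i - 1) /
              ∏ j ∈ (Finset.Ico s (q + 1)).erase i, (z i - z j) ^ 2) / (z b - z s) := by
        rw [← Finset.sum_sub_distrib, Finset.sum_div]
        refine Finset.sum_congr rfl fun i hi => ?_
        rw [Finset.mem_Ico] at hi
        have hin : i < n := by omega
        rw [prod_split_bot z s (q + 1) i (by omega) (by omega)]
        have h1 : z i - z s ≠ 0 := hne i s hin hsn' (by omega)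
        have h2 : z i - z b ≠ 0 := hne i b hin hbn (by omega)
        have h3 : (∏ j ∈ (Finset.Ico (s + 1) (q + 1)).erase i, (z i - z j) ^ 2) ≠ 0 :=
          hPne (s + 1) (q + 1) i (by omega) hin
        exact alg4 (α i - 1) (z i - z s) (z i - z b) _ _ h1 h2 h3 hd (by ring)
      rw [hkey]
      have hbot : (α s - 1) / ((z s - z b) *
            ∏ j ∈ (Finset.Ico s (q + 1)).erase s, (z s - z j) ^ 2)
          = (-((α s - 1) /
              ∏ j ∈ (Finset.Ico s (q + 1)).erase s, (z s - z j) ^ 2)) / (z b - z s) := by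
        have h2 : z s - z b ≠ 0 := hne s b hsn' hbn (by omega)
        have h3 : (∏ j ∈ (Finset.Ico s (q + 1)).erase s, (z s - z j) ^ 2) ≠ 0 :=
          hPne s (q + 1) s (by omega) hsn'
        exact alg5 (α s - 1) (z s - z b) _ (z b - z s) h2 h3 hd (by ring)
      rw [hbot]
      ring
    -- C(m'+2)
    have hC2 : ∀ a s, a < s → s + (m' + 1 + 1) ≤ n →
        dd (fun w => p.eval w) (fun w => p.derivative.eval w)
            (z a :: dl z s (m' + 1 + 1)) =
          ∑ i ∈ Finset.Ico s (s + (m' + 1 + 1)), (α i - 1) /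
            ((z i - z a) *
              ∏ j ∈ (Finset.Ico s (s + (m' + 1 + 1))).erase i, (z i - z j) ^ 2) := by
      intro a s has hsn
      set q := s + (m' + 1) with hq
      have e : z a :: dl z s (m' + 1 + 1)
          = z a :: z s :: ((z s :: dl z (s + 1) m' ++ [z q]) ++ [z q]) := by
        rw [dl_succ, dl_concat, show s + 1 + m' = q by omega]
        simp
      have e1 : z s :: ((z s :: dl z (s + 1) m' ++ [z q]) ++ [z q])
          = dl z s (m' + 1 + 1) := by
        rw [dl_succ, dl_concat, show s + 1 + m' = q by omega]
        simp
      have e2 : z a :: z s :: (z s :: dl z (s + 1) m' ++ [z q])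
          = z a :: (dl z s (m' + 1) ++ [z q]) := by
        rw [dl_succ]
        simp
      rw [e, dd_eq', e1, e2]
      rw [hD2 s (by omega)]
      rw [hIA a s q has (by omega) (by omega)]
      have eub2 : s + (m' + 1 + 1) = q + 1 := by omega
      rw [eub2]
      rw [Finset.sum_Ico_succ_top (by omega : s ≤ q)
        (fun i => (α i - 1) /
          ∏ j ∈ (Finset.Ico s (q + 1)).erase i, (z i - z j) ^ 2)]
      rw [Finset.sum_Ico_succ_top (by omega : s ≤ q)
        (fun i => (α i - 1) / ((z i - z a) *
          ∏ j ∈ (Finset.Ico s (q + 1)).erase i, (z i - z j) ^ 2))]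
      have hqn : q < n := by omega
      have han : a < n := by omega
      have hd : z q - z a ≠ 0 := hne q a hqn han (by omega)
      have hkey : (∑ i ∈ Finset.Ico s q, (α i - 1) / ((z i - z a) *
            ∏ j ∈ (Finset.Ico s (q + 1)).erase i, (z i - z j) ^ 2))
          = ((∑ i ∈ Finset.Ico s q, (α i - 1) /
              ∏ j ∈ (Finset.Ico s (q + 1)).erase i, (z i - z j) ^ 2)
            - ∑ i ∈ Finset.Ico s q, (α i - 1) / ((z i - z a) * ((z i - z q) *
              ∏ j ∈ (Finset.Ico s q).erase i, (z i - z j) ^ 2))) / (z q - z a) := by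
        rw [← Finset.sum_sub_distrib, Finset.sum_div]
        refine Finset.sum_congr rfl fun i hi => ?_
        rw [Finset.mem_Ico] at hi
        have hin : i < n := by omega
        rw [prod_split_top z s q i (by omega) (by omega)]
        have h1 : z i - z a ≠ 0 := hne i a hin han (by omega)
        have h2 : z i - z q ≠ 0 := hne i q hin hqn (by omega)
        have h3 : (∏ j ∈ (Finset.Ico s q).erase i, (z i - z j) ^ 2) ≠ 0 :=
          hPne s q i (by omega) hin
        exact alg6 (α i - 1) (z i - z a) (z i - z q) _ _ h1 h2 h3 hd (by ring)
      rw [hkey]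
      have htop : (α q - 1) / ((z q - z a) *
            ∏ j ∈ (Finset.Ico s (q + 1)).erase q, (z q - z j) ^ 2)
          = ((α q - 1) /
              ∏ j ∈ (Finset.Ico s (q + 1)).erase q, (z q - z j) ^ 2) / (z q - z a) := by
        have h3 : (∏ j ∈ (Finset.Ico s (q + 1)).erase q, (z q - z j) ^ 2) ≠ 0 :=
          hPne s (q + 1) q (by omega) hqn
        exact alg7 (α q - 1) (z q - z a) _ hd h3
      rw [htop]
      ring
    -- A(m'+2)
    refine ⟨hB2, hC2, ?_, fun _ => hD2⟩
    intro a s b has hsb hbn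
    have e : z a :: (dl z s (m' + 1 + 1) ++ [z b])
        = z a :: z s :: ((z s :: dl z (s + 1) (m' + 1)) ++ [z b]) := by
      rw [dl_succ]
      simp
    have e1 : z s :: ((z s :: dl z (s + 1) (m' + 1)) ++ [z b])
        = dl z s (m' + 1 + 1) ++ [z b] := by
      rw [dl_succ z s (m' + 1)]
      simp
    have e2 : z a :: z s :: (z s :: dl z (s + 1) (m' + 1))
        = z a :: dl z s (m' + 1 + 1) := by
      rw [dl_succ z s (m' + 1)]
    rw [e, dd_eq', e1, e2]
    rw [hB2 s b hsb hbn, hC2 a s has (by omega)]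
    rw [← Finset.sum_sub_distrib, Finset.sum_div]
    refine Finset.sum_congr rfl fun i hi => ?_
    rw [Finset.mem_Ico] at hi
    have hin : i < n := by omega
    have han : a < n := by omega
    have h1 : z i - z a ≠ 0 := hne i a hin han (by omega)
    have h2 : z i - z b ≠ 0 := hne i b hin hbn (by omega)
    have h3 : (∏ j ∈ (Finset.Ico s (s + (m' + 1 + 1))).erase i, (z i - z j) ^ 2) ≠ 0 :=
      hPne s (s + (m' + 1 + 1)) i (by omega) hin
    have hd : z b - z a ≠ 0 := hne b a hbn han (by omega)
    exact (alg8 (α i - 1) (z i - z a) (z i - z b) _ _ h1 h2 h3 hd (by ring)).symm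

/-- Statement (6): `f[z₁,z₂,z₂,…,z_k,z_k,z_{k+1}]
= Σ_{i=2}^k (αᵢ-1)(zᵢ-z₁)(zᵢ-z_{k+1})/πᵢ^{k+1}`. (Indices `0,…,k`;
the paper's index `i` corresponds to `i-1` here.) -/
theorem divided_difference_middle_doubled (n : ℕ) (p : ℂ[X]) (z : ℕ → ℂ)
    (hz : ∀ i < n, ∀ j < n, z i = z j → i = j)
    (hfix : ∀ i < n, p.eval (z i) = z i)
    (α : ℕ → ℂ) (hα : ∀ i < n, p.derivative.eval (z i) = α i) :
    ∀ k, 2 ≤ k → k ≤ n - 1 →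
      dd (fun w => p.eval w) (fun w => p.derivative.eval w)
          (z 0 :: (((List.range' 1 (k - 1)).flatMap fun i => [z i, z i]) ++ [z k])) =
        ∑ i ∈ Finset.Ico 1 k,
          (α i - 1) * (z i - z 0) * (z i - z k) /
            ∏ j ∈ (Finset.range (k + 1)).erase i, (z i - z j) ^ 2 := by
  intro k hk2 hkn
  have hkn' : k < n := by omega
  have hA := (master n p z hz hfix α hα (k - 1) (by omega)).2.2.1 0 1 k
    (by omega) (by omega) hkn'
  have hl : z 0 :: (((List.range' 1 (k - 1)).flatMap fun i => [z i, z i]) ++ [z k])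
      = z 0 :: (dl z 1 (k - 1) ++ [z k]) := rfl
  rw [hl, hA, show 1 + (k - 1) = k by omega]
  refine Finset.sum_congr rfl fun i hi => ?_
  rw [Finset.mem_Ico] at hi
  have hin : i < n := by omega
  have h0n : 0 < n := by omega
  rw [Finset.range_eq_Ico]
  rw [prod_split_bot z 0 (k + 1) i (by omega) (by omega)]
  rw [prod_split_top z 1 k i (by omega) (by omega)]
  have hne : ∀ a b : ℕ, a < n → b < n → a ≠ b → z a - z b ≠ 0 := by
    intro a b ha hb hab
    exact sub_ne_zero_of_ne fun h => hab (hz a ha b hb h)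
  have h1 : z i - z 0 ≠ 0 := hne i 0 hin h0n (by omega)
  have h2 : z i - z k ≠ 0 := hne i k hin hkn' (by omega)
  have h3 : (∏ j ∈ (Finset.Ico 1 k).erase i, (z i - z j) ^ 2) ≠ 0 := by
    refine Finset.prod_ne_zero_iff.mpr fun j hj => ?_
    rw [Finset.mem_erase, Finset.mem_Ico] at hj
    exact pow_ne_zero _ (hne i j hin (by omega) (Ne.symm hj.1))
  exact alg9 (α i - 1) (z i - z 0) (z i - z k) _ h1 h2 h3
end

section
/- Let z₁, …, zₙ (n ≥ 2) be distinct complex numbers all lying on a common line in the complex plane, and let α₁, …, αₙ be complex numbers each with Re(αᵢ) < 1. Then the sum Σ_{i=1}^{n} (αᵢ - 1)/π_i is nonzero, where π_i = ∏_{j≠i} (zᵢ - zⱼ)². -/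
open Finset

theorem collinear_sum_ne_zero (n : ℕ) (hn : 2 ≤ n) (z : ℕ → ℂ)
    (hz : ∀ i < n, ∀ j < n, z i = z j → i = j)
    (hline : Collinear ℝ {w : ℂ | ∃ i < n, z i = w})
    (α : ℕ → ℂ) (hα : ∀ i < n, (α i).re < 1) :
    (∑ i ∈ Finset.range n,
        (α i - 1) / ∏ j ∈ (Finset.range n).erase i, (z i - z j) ^ 2) ≠ 0 := by
  have h0 : z 0 ∈ {w : ℂ | ∃ i < n, z i = w} := ⟨0, by omega, rfl⟩
  obtain ⟨v, hv⟩ := (collinear_iff_of_mem h0).1 hline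
  have ht : ∀ i, i < n → ∃ r : ℝ, z i = r • v + z 0 := fun i hi => hv (z i) ⟨i, hi, rfl⟩
  choose t' ht' using ht
  set t : ℕ → ℝ := fun i => if h : i < n then t' i h else 0 with htdef
  have hzt : ∀ i < n, z i = (t i : ℂ) * v + z 0 := by
    intro i hi
    simp only [htdef, dif_pos hi]
    rw [← Complex.real_smul]
    exact ht' i hi
  have hdiff : ∀ i < n, ∀ j < n, z i - z j = ((t i - t j : ℝ) : ℂ) * v := by
    intro i hi j hj
    rw [hzt i hi, hzt j hj]; push_cast; ring
  have hvne : v ≠ 0 := by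
    intro h
    have h01 : z 0 = z 1 := by
      rw [hzt 0 (by omega), hzt 1 (by omega), h]; ring
    exact absurd (hz 0 (by omega) 1 (by omega) h01) (by norm_num)
  have htinj : ∀ i < n, ∀ j < n, i ≠ j → t i ≠ t j := by
    intro i hi j hj hij h
    apply hij
    apply hz i hi j hj
    rw [hzt i hi, hzt j hj, h]
  set r : ℕ → ℝ := fun i => ∏ j ∈ (Finset.range n).erase i, (t i - t j) ^ 2 with hrdef
  have hrpos : ∀ i ∈ Finset.range n, 0 < r i := by
    intro i hi
    apply Finset.prod_pos
    intro j hj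
    have hj' := Finset.mem_erase.1 hj
    have hne : t i ≠ t j := htinj i (Finset.mem_range.1 hi) j
      (Finset.mem_range.1 hj'.2) (fun h => hj'.1 h.symm)
    have : t i - t j ≠ 0 := sub_ne_zero.2 hne
    positivity
  have hprod : ∀ i ∈ Finset.range n, ∏ j ∈ (Finset.range n).erase i, (z i - z j) ^ 2
      = (r i : ℂ) * v ^ (2 * (n - 1)) := by
    intro i hi
    have hi' := Finset.mem_range.1 hi
    have hcong : ∀ j ∈ (Finset.range n).erase i,
        (z i - z j) ^ 2 = ((t i - t j : ℝ) : ℂ) ^ 2 * v ^ 2 := by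
      intro j hj
      rw [hdiff i hi' j (Finset.mem_range.1 (Finset.mem_erase.1 hj).2)]; ring
    rw [Finset.prod_congr rfl hcong, Finset.prod_mul_distrib, Finset.prod_const,
      Finset.card_erase_of_mem hi, Finset.card_range, ← pow_mul]
    congr 1
    rw [hrdef]
    push_cast
    ring
  have hsum_eq : (∑ i ∈ Finset.range n,
        (α i - 1) / ∏ j ∈ (Finset.range n).erase i, (z i - z j) ^ 2)
      = (∑ i ∈ Finset.range n, (α i - 1) / (r i : ℂ)) * (v ^ (2 * (n - 1)))⁻¹ := by
    rw [Finset.sum_mul]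
    apply Finset.sum_congr rfl
    intro i hi
    rw [hprod i hi, ← div_div, div_eq_mul_inv (_ / _)]
  rw [hsum_eq]
  apply mul_ne_zero
  · intro h
    have hre : (∑ i ∈ Finset.range n, (α i - 1) / (r i : ℂ)).re = 0 := by rw [h]; rfl
    rw [Complex.re_sum] at hre
    have hneg : (∑ i ∈ Finset.range n, ((α i - 1) / (r i : ℂ)).re) < 0 := by
      apply Finset.sum_neg
      · intro i hi
        rw [Complex.div_ofReal_re]
        apply div_neg_of_neg_of_pos _ (hrpos i hi)
        have : (α i).re < 1 := hα i (Finset.mem_range.1 hi)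
        simp [Complex.sub_re]
        linarith
      · exact Finset.nonempty_range_iff.2 (by omega)
    linarith
  · exact inv_ne_zero (pow_ne_zero _ hvne)
end

section
/- A complex polynomial of degree n ≥ 2 has at most ⌈n/2⌉ distinct real attractive fixed points. -/
open Polynomial Filter Set

private lemma aux_neg_right {f : ℝ → ℝ} {z r b : ℝ} (hd : HasDerivAt f r z) (hr : r < 0)
    (hf : f z = 0) (hb : z < b) : ∃ x, z < x ∧ x < b ∧ f x < 0 := by
  have h := hasDerivAt_iff_tendsto_slope.mp hd
  have h1 : ∀ᶠ x in nhdsWithin z {z}ᶜ, slope f z x < 0 :=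
    h.eventually_lt_const hr
  have h2 : ∀ᶠ x in nhdsWithin z (Ioi z), slope f z x < 0 :=
    h1.filter_mono (nhdsWithin_mono _ (fun x hx => ne_of_gt hx))
  have h3 : Ioo z b ∈ nhdsWithin z (Ioi z) :=
    Ioo_mem_nhdsGT_of_mem ⟨le_rfl, hb⟩
  obtain ⟨x, hs, hx⟩ := (h2.and h3).exists
  refine ⟨x, hx.1, hx.2, ?_⟩
  rw [slope_def_field, hf, sub_zero] at hs
  rcases div_neg_iff.mp hs with ⟨_, h'⟩ | ⟨h', h''⟩
  · linarith [hx.1]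
  · exact h'

private lemma aux_pos_left {f : ℝ → ℝ} {z r a : ℝ} (hd : HasDerivAt f r z) (hr : r < 0)
    (hf : f z = 0) (ha : a < z) : ∃ x, a < x ∧ x < z ∧ 0 < f x := by
  have h := hasDerivAt_iff_tendsto_slope.mp hd
  have h1 : ∀ᶠ x in nhdsWithin z {z}ᶜ, slope f z x < 0 :=
    h.eventually_lt_const hr
  have h2 : ∀ᶠ x in nhdsWithin z (Iio z), slope f z x < 0 :=
    h1.filter_mono (nhdsWithin_mono _ (fun x hx => ne_of_lt hx))
  have h3 : Ioo a z ∈ nhdsWithin z (Iio z) :=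
    Ioo_mem_nhdsLT_of_mem ⟨ha, le_rfl⟩
  obtain ⟨x, hs, hx⟩ := (h2.and h3).exists
  refine ⟨x, hx.1, hx.2, ?_⟩
  rw [slope_def_field, hf, sub_zero] at hs
  rcases div_neg_iff.mp hs with ⟨h', _⟩ | ⟨h', h''⟩
  · exact h'
  · linarith [hx.2]

private lemma aux_root_between {f : ℝ → ℝ} (hc : Continuous f) {z1 z2 r1 r2 : ℝ}
    (hlt : z1 < z2) (hf1 : f z1 = 0) (hf2 : f z2 = 0)
    (hd1 : HasDerivAt f r1 z1) (hd2 : HasDerivAt f r2 z2)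
    (hr1 : r1 < 0) (hr2 : r2 < 0) : ∃ y, z1 < y ∧ y < z2 ∧ f y = 0 := by
  obtain ⟨a, ha1, ha2, hfa⟩ := aux_neg_right hd1 hr1 hf1 hlt
  obtain ⟨b, hb1, hb2, hfb⟩ := aux_pos_left hd2 hr2 hf2 ha2
  obtain ⟨y, hy, hfy⟩ := intermediate_value_Ioo (le_of_lt hb1)
    (hc.continuousOn (s := Icc a b)) ⟨hfa, hfb⟩
  exact ⟨y, lt_trans ha1 hy.1, lt_trans hy.2 hb2, hfy⟩

theorem real_attractive_fixed_points_bound (p : ℂ[X]) (n : ℕ) (hn : 2 ≤ n)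
    (hdeg : p.natDegree = n) (k : ℕ) (z : ℕ → ℝ)
    (hz : ∀ i < k, ∀ j < k, z i = z j → i = j)
    (hfix : ∀ i < k, p.eval (z i : ℂ) = (z i : ℂ))
    (hattr : ∀ i < k, ‖p.derivative.eval (z i : ℂ)‖ < 1) :
    k ≤ (n + 1) / 2 := by
  rcases Nat.eq_zero_or_pos k with hk0 | hk1
  · omega
  set q : ℂ[X] := p - X with hq
  have hqdeg : q.natDegree ≤ n := by
    have h := Polynomial.natDegree_sub_le p X
    rw [hdeg, Polynomial.natDegree_X] at h
    exact le_trans h (by omega)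
  set f : ℝ → ℝ := fun x => (q.eval (x : ℂ)).re with hfdef
  have hcont : Continuous f :=
    Complex.continuous_re.comp ((q.continuous).comp Complex.continuous_ofReal)
  have hderiv : ∀ t : ℝ, HasDerivAt f ((q.derivative.eval (t : ℂ)).re) t := fun t =>
    (q.hasDerivAt (t : ℂ)).real_of_complex
  -- properties at the points z i
  have hzero : ∀ i < k, f (z i) = 0 := by
    intro i hi
    simp [hfdef, hq, hfix i hi]
  have hneg : ∀ i < k, (q.derivative.eval ((z i : ℝ) : ℂ)).re < 0 := by
    intro i hi
    have h1 : q.derivative = p.derivative - 1 := by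
      rw [hq, derivative_sub, derivative_X]
    rw [h1]
    simp only [eval_sub, eval_one, Complex.sub_re, Complex.one_re]
    have := Complex.re_le_norm (p.derivative.eval ((z i : ℝ) : ℂ))
    linarith [hattr i hi]
  -- the real-part polynomial
  set u : ℝ[X] := ∑ i ∈ Finset.range (n + 1), Polynomial.C ((q.coeff i).re) * Polynomial.X ^ i
    with hu
  have hueval : ∀ x : ℝ, u.eval x = f x := by
    intro x
    have h1 : q.eval (x : ℂ) = ∑ i ∈ Finset.range (n + 1), q.coeff i * (x : ℂ) ^ i :=
      eval_eq_sum_range' (lt_of_le_of_lt hqdeg (Nat.lt_succ_self n)) _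
    calc u.eval x = ∑ i ∈ Finset.range (n + 1), (q.coeff i).re * x ^ i := by
          simp [hu, eval_finset_sum]
      _ = (∑ i ∈ Finset.range (n + 1), q.coeff i * (x : ℂ) ^ i).re := by
          rw [Complex.re_sum]
          refine Finset.sum_congr rfl fun i _ => ?_
          rw [← Complex.ofReal_pow, Complex.mul_re, Complex.ofReal_re, Complex.ofReal_im,
            mul_zero, sub_zero]
      _ = f x := by rw [← h1]
  have hune : u ≠ 0 := by
    intro h0
    have hf0 : ∀ x : ℝ, f x = 0 := fun x => by rw [← hueval x, h0, eval_zero]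
    have h1 : HasDerivAt f 0 (z 0) := by
      have : f = fun _ => (0 : ℝ) := funext hf0
      rw [this]; exact hasDerivAt_const _ _
    have h2 := (hderiv (z 0)).unique h1
    have := hneg 0 hk1
    rw [h2] at this
    exact lt_irrefl _ this
  have hudeg : u.natDegree ≤ n := by
    refine natDegree_sum_le_of_forall_le _ _ fun i hi => ?_
    refine le_trans (natDegree_C_mul_le _ _) ?_
    rw [natDegree_X_pow]
    exact Nat.lt_succ_iff.mp (Finset.mem_range.mp hi)
  -- sorting
  set S : Finset ℝ := (Finset.range k).image z with hS
  have hScard : S.card = k := by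
    rw [hS, Finset.card_image_of_injOn, Finset.card_range]
    intro i hi j hj h
    exact hz i (Finset.mem_range.mp hi) j (Finset.mem_range.mp hj) h
  set e := S.orderIsoOfFin hScard with he
  set w : ℕ → ℝ := fun i => if h : i < k then (e ⟨i, h⟩ : ℝ) else 0 with hw
  have hwmem : ∀ i, i < k → w i ∈ S := by
    intro i hi
    simp only [hw, dif_pos hi]
    exact (e ⟨i, hi⟩).2
  have hwmono : ∀ i j, i < j → j < k → w i < w j := by
    intro i j hij hj
    have hi : i < k := lt_trans hij hj
    simp only [hw, dif_pos hi, dif_pos hj]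
    exact e.strictMono (by exact hij : (⟨i, hi⟩ : Fin k) < ⟨j, hj⟩)
  have hSw : ∀ s ∈ S, ∃ j, j < k ∧ s = w j := by
    intro s hs
    obtain ⟨m, hm⟩ := e.surjective ⟨s, hs⟩
    exact ⟨m, m.2, by simp [hw, dif_pos m.2, hm]⟩
  have hSprop : ∀ s ∈ S, f s = 0 ∧ (q.derivative.eval ((s : ℝ) : ℂ)).re < 0 := by
    intro s hs
    rw [hS, Finset.mem_image] at hs
    obtain ⟨i, hi, rfl⟩ := hs
    exact ⟨hzero i (Finset.mem_range.mp hi), hneg i (Finset.mem_range.mp hi)⟩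
  -- extra roots between consecutive sorted points
  have hexists : ∀ i, ∃ y, i + 1 < k → w i < y ∧ y < w (i + 1) ∧ f y = 0 := by
    intro i
    by_cases hi : i + 1 < k
    · have hi' : i < k := by omega
      obtain ⟨h01, h02⟩ := hSprop _ (hwmem i hi')
      obtain ⟨h11, h12⟩ := hSprop _ (hwmem (i + 1) hi)
      obtain ⟨y, hy⟩ := aux_root_between hcont (hwmono i (i + 1) (by omega) hi) h01 h11
        (hderiv _) (hderiv _) h02 h12
      exact ⟨y, fun _ => hy⟩
    · exact ⟨0, fun h => absurd h hi⟩
  choose y hy using hexists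
  set T : Finset ℝ := S ∪ (Finset.range (k - 1)).image y with hT
  have hyrange : ∀ i, i < k - 1 → w i < y i ∧ y i < w (i + 1) ∧ f (y i) = 0 :=
    fun i hi => hy i (by omega)
  have hynotS : ∀ i, i < k - 1 → y i ∉ S := by
    intro i hi hmem
    obtain ⟨j, hj, hje⟩ := hSw _ hmem
    obtain ⟨h1, h2, _⟩ := hyrange i hi
    rw [hje] at h1 h2
    rcases lt_trichotomy j i with h | h | h
    · exact absurd (lt_trans (hwmono j i h (by omega)) h1) (lt_irrefl _)
    · subst h; exact lt_irrefl _ h1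
    · rcases Nat.lt_or_ge j (i + 1) with h' | h'
      · omega
      · rcases Nat.eq_or_lt_of_le h' with h'' | h''
        · rw [← h''] at h2; exact lt_irrefl _ h2
        · exact absurd (lt_trans h2 (hwmono (i + 1) j h'' hj)) (lt_irrefl _)
  have hyinj : InjOn y ↑(Finset.range (k - 1)) := by
    intro i hi j hj hij
    simp only [Finset.coe_range, Set.mem_Iio] at hi hj
    by_contra hne
    rcases Nat.lt_or_ge i j with h | h
    · obtain ⟨_, h2, _⟩ := hyrange i hi
      obtain ⟨h1', _, _⟩ := hyrange j hj
      have : w (i + 1) ≤ w j := by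
        rcases Nat.eq_or_lt_of_le (Nat.succ_le_of_lt h) with h'' | h''
        · exact le_of_eq (congrArg w h'')
        · exact le_of_lt (hwmono _ _ h'' (by omega))
      linarith [hij ▸ lt_of_lt_of_le h2 (le_of_lt (lt_of_le_of_lt this h1'))]
    · have h' : j < i := by omega
      obtain ⟨_, h2, _⟩ := hyrange j hj
      obtain ⟨h1', _, _⟩ := hyrange i hi
      have : w (j + 1) ≤ w i := by
        rcases Nat.eq_or_lt_of_le (Nat.succ_le_of_lt h') with h'' | h''
        · exact le_of_eq (congrArg w h'')
        · exact le_of_lt (hwmono _ _ h'' (by omega))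
      linarith [hij ▸ lt_of_lt_of_le h2 (le_of_lt (lt_of_le_of_lt this h1'))]
  have hTcard : T.card = k + (k - 1) := by
    rw [hT, Finset.card_union_of_disjoint, hScard, Finset.card_image_of_injOn hyinj,
      Finset.card_range]
    rw [Finset.disjoint_right]
    intro a ha haS
    obtain ⟨i, hi, rfl⟩ := Finset.mem_image.mp ha
    exact hynotS i (Finset.mem_range.mp hi) haS
  have hTroots : T ⊆ u.roots.toFinset := by
    intro t ht
    rw [Multiset.mem_toFinset, mem_roots']
    refine ⟨hune, ?_⟩
    rw [hT, Finset.mem_union] at ht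
    rcases ht with ht | ht
    · exact (hueval t).trans (hSprop t ht).1
    · obtain ⟨i, hi, rfl⟩ := Finset.mem_image.mp ht
      exact (hueval _).trans (hyrange i (Finset.mem_range.mp hi)).2.2
  have hcount : k + (k - 1) ≤ n := by
    calc k + (k - 1) = T.card := hTcard.symm
      _ ≤ u.roots.toFinset.card := Finset.card_le_card hTroots
      _ ≤ Multiset.card u.roots := Multiset.toFinset_card_le _
      _ ≤ u.natDegree := card_roots' u
      _ ≤ n := hudeg
  omega
end

section
/- For n ≥ 2, the polynomial p(z) = (-z^{n+1} + (n+1)z)/n has each n-th root of unity as an attractive fixed point; in particular p has degree n + 1 and at least n attractive fixed points (indeed p'(ω) = 0 for every n-th root of unity ω). -/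
open Polynomial

theorem roots_of_unity_attractive (n : ℕ) (hn : 2 ≤ n)
    (p : ℂ[X]) (hp : p = C (-(1 : ℂ) / n) * X ^ (n + 1) + C ((n + 1 : ℂ) / n) * X) :
    p.natDegree = n + 1 ∧
      ∀ ω : ℂ, ω ^ n = 1 →
        p.eval ω = ω ∧ p.derivative.eval ω = 0 ∧ ‖p.derivative.eval ω‖ < 1 := by
  have hn0 : (n : ℂ) ≠ 0 := Nat.cast_ne_zero.mpr (by omega)
  subst hp
  constructor
  · have hne : n ≠ 0 := by omega
    compute_degree!
    simp only [hne, if_false, add_zero]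
    rw [Rat.mkRat_eq_div]
    push_cast
    simp [hn0]
  · intro ω hω
    have h1 : ω ^ (n + 1) = ω := by rw [pow_succ, hω, one_mul]
    have hd : (C (-(1 : ℂ) / n) * X ^ (n + 1) + C ((n + 1 : ℂ) / n) * X).derivative.eval ω = 0 := by
      simp only [derivative_add, derivative_C_mul, derivative_X_pow, derivative_X,
        eval_add, eval_mul, eval_C, eval_pow, eval_X, mul_one]
      rw [show n + 1 - 1 = n from rfl, hω]
      push_cast
      field_simp
      ring
    refine ⟨?_, hd, ?_⟩
    · simp only [eval_add, eval_mul, eval_C, eval_pow, eval_X, h1]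
      field_simp
      ring
    · rw [hd]; simp
end

section
/- A complex polynomial p of degree n ≥ 2 in which every fixed point z satisfies |p'(z)| < 1 cannot exist; i.e., every polynomial of degree n ≥ 2 has at least one fixed point z with |p'(z)| ≥ 1. -/
open Polynomial


lemma sum_nodalWeight_eq_zero (s : Finset ℂ) (h2 : 2 ≤ s.card) :
    ∑ z ∈ s, Lagrange.nodalWeight s id z = 0 := by
  classical
  have hinj : Set.InjOn (id : ℂ → ℂ) s := Function.injective_id.injOn
  have hs : s.Nonempty := Finset.card_pos.mp (by omega)
  have hsum := Lagrange.sum_basis hinj hs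
  have hc := congrArg (fun q : ℂ[X] => q.coeff (s.card - 1)) hsum
  simp only [Polynomial.finset_sum_coeff] at hc
  have hco : ∀ i ∈ s, (Lagrange.basis s id i).coeff (s.card - 1)
      = Lagrange.nodalWeight s id i := by
    intro i hi
    rw [Lagrange.basis_eq_prod_sub_inv_mul_nodal_div hi,
      ← Lagrange.nodal_erase_eq_nodal_div hi, Polynomial.coeff_C_mul]
    have hm : (Lagrange.nodal (s.erase i) (id : ℂ → ℂ)).Monic := Lagrange.nodal_monic
    have hd : (Lagrange.nodal (s.erase i) (id : ℂ → ℂ)).natDegree = s.card - 1 := by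
      rw [Lagrange.natDegree_nodal, Finset.card_erase_of_mem hi]
    rw [← hd, hm.coeff_natDegree, mul_one]
  rw [Finset.sum_congr rfl hco, Polynomial.coeff_one, if_neg (by omega)] at hc
  exact hc

theorem exists_unattractive_fixed_point (p : ℂ[X]) (hdeg : 2 ≤ p.natDegree) :
    ∃ z : ℂ, p.eval z = z ∧ 1 ≤ ‖p.derivative.eval z‖ := by
  classical
  by_contra hcon
  push_neg at hcon
  set q : ℂ[X] := p - X with hqdef
  have hqdeg : q.natDegree = p.natDegree := by
    apply Polynomial.natDegree_sub_eq_left_of_natDegree_lt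
    simp only [natDegree_X]; omega
  have hq0 : q ≠ 0 := fun h => by rw [h, natDegree_zero] at hqdeg; omega
  have hfix : ∀ z : ℂ, q.eval z = 0 ↔ p.eval z = z := by
    intro z; simp [hqdef, sub_eq_zero]
  have hderiv : ∀ z : ℂ, q.derivative.eval z = p.derivative.eval z - 1 := by
    intro z; simp [hqdef]
  have hsimple : ∀ z ∈ q.roots, q.derivative.eval z ≠ 0 := by
    intro z hz hz0
    have hroot : p.eval z = z := (hfix z).mp (Polynomial.isRoot_of_mem_roots hz)
    have h1 : p.derivative.eval z = 1 := by
      have h := hderiv z; rw [hz0] at h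
      exact (sub_eq_zero.mp h.symm)
    have h2 := hcon z hroot
    rw [h1] at h2; simp at h2
  have hnodup : q.roots.Nodup := by
    rw [Multiset.nodup_iff_count_le_one]
    intro z
    by_contra h
    push_neg at h
    have hz : z ∈ q.roots := by rw [← Multiset.count_pos]; omega
    have h1 : 1 < q.rootMultiplicity z := by rw [← Polynomial.count_roots]; omega
    have h2 := (Polynomial.one_lt_rootMultiplicity_iff_isRoot hq0).mp h1
    exact hsimple z hz h2.2
  have hcardroots : q.roots.card = q.natDegree :=
    (IsAlgClosed.splits q).natDegree_eq_card_roots.symm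
  set s : Finset ℂ := q.roots.toFinset with hsdef
  have hscard : s.card = q.natDegree := by
    rw [hsdef, Multiset.toFinset_card_of_nodup hnodup, hcardroots]
  have h2s : 2 ≤ s.card := by omega
  set c : ℂ := q.leadingCoeff with hcdef
  have hc0 : c ≠ 0 := Polynomial.leadingCoeff_ne_zero.mpr hq0
  have hqfact : q = C c * Lagrange.nodal s id := by
    have h := (IsAlgClosed.splits q).eq_prod_roots
    rw [h, Lagrange.nodal_eq]
    congr 1
    simp only [id]
    rw [Finset.prod_eq_multiset_prod, hsdef, Multiset.toFinset_val, hnodup.dedup]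
  -- derivative at each root
  have hqderiv : ∀ z ∈ s, q.derivative.eval z = c * (Lagrange.nodal (s.erase z) id).eval z := by
    intro z hz
    rw [hqfact]
    simp only [derivative_mul, derivative_C, zero_mul, eval_add, eval_mul, eval_C, zero_add]
    exact congrArg (c * ·) (Lagrange.eval_nodal_derivative_eval_node_eq (v := id) hz)
  -- the residue sum
  have hsum0 : ∑ z ∈ s, (q.derivative.eval z)⁻¹ = 0 := by
    have : ∀ z ∈ s, (q.derivative.eval z)⁻¹ = c⁻¹ * Lagrange.nodalWeight s id z := by
      intro z hz
      rw [hqderiv z hz, mul_inv, Lagrange.eval_nodal,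
        Lagrange.nodalWeight]
      simp [Finset.prod_inv_distrib]
    rw [Finset.sum_congr rfl this, ← Finset.mul_sum, sum_nodalWeight_eq_zero s h2s, mul_zero]
  -- each term has negative real part
  have hneg : ∀ z ∈ s, ((q.derivative.eval z)⁻¹).re < 0 := by
    intro z hz
    have hzr : z ∈ q.roots := Multiset.mem_toFinset.mp hz
    have hroot : p.eval z = z := (hfix z).mp (Polynomial.isRoot_of_mem_roots hzr)
    have habs := hcon z hroot
    have hre : (q.derivative.eval z).re < 0 := by
      have h1 : (p.derivative.eval z).re < 1 :=
        lt_of_le_of_lt (le_abs_self _)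
          (lt_of_le_of_lt (Complex.abs_re_le_norm _) habs)
      rw [hderiv z]; simp [h1]
    rw [Complex.inv_re]
    apply div_neg_of_neg_of_pos hre
    rw [Complex.normSq_pos]
    exact hsimple z hzr
  have hspos : s.Nonempty := Finset.card_pos.mp (by omega)
  have : (∑ z ∈ s, (q.derivative.eval z)⁻¹).re < 0 := by
    rw [Complex.re_sum]
    exact Finset.sum_neg hneg hspos
  rw [hsum0] at this
  simp at this
end
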